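/- In an asynchronous shared-memory system where a processor's view v_t satisfies v_t[j] = x_{t-τ_t^j}[j] componentwise with all delays τ_t^j ≤ τ_max, and each update step satisfies E[‖x_{s+1} - x_s‖²] ≤ α²M², the view discrepancy satisfies E[‖x_t - v_t‖²] ≤ d·τ_max²·α²·M² where d is the dimension. -/
import Mathlib


open MeasureTheory

/-- asynchronous shared-memory elastic consistency bound.  The processor's
view `v` satisfies `v[j] = x_{t-τⱼ}[j]` componentwise with all delays `τⱼ ≤ τ_max ≤ t`, and
each SGD update step satisfies `E‖x_{s+1} - x_s‖² ≤ α²M²`.  Then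
`E‖x_t - v‖² ≤ d·τ_max²·α²·M²`. -/
theorem stmt14 {d : ℕ} {Ω : Type*} [MeasurableSpace Ω]
    (μ : Measure Ω) [IsProbabilityMeasure μ]
    (α M : ℝ) (hM : 0 ≤ M) (τmax t : ℕ) (ht : τmax ≤ t)
    (x : ℕ → Ω → EuclideanSpace ℝ (Fin d)) (v : Ω → EuclideanSpace ℝ (Fin d))
    (τ : Fin d → ℕ) (hτ : ∀ j, τ j ≤ τmax)
    (hview : ∀ ω j, v ω j = x (t - τ j) ω j)
    (hstep : ∀ s, ∫ ω, ‖x (s + 1) ω - x s ω‖ ^ 2 ∂μ ≤ α ^ 2 * M ^ 2)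
    (hint : ∀ s, Integrable (fun ω => ‖x (s + 1) ω - x s ω‖ ^ 2) μ) :
    ∫ ω, ‖x t ω - v ω‖ ^ 2 ∂μ ≤ (d : ℝ) * (τmax : ℝ) ^ 2 * α ^ 2 * M ^ 2 := by
  rcases Nat.eq_zero_or_pos d with hd | hd
  · subst hd
    have h0 : ∀ ω, ‖x t ω - v ω‖ ^ 2 = 0 := by
      intro ω
      have : x t ω - v ω = 0 := Subsingleton.elim _ _
      simp [this]
    simp only [h0]
    simp
  -- pointwise bound
  have hnorm : ∀ (y : EuclideanSpace ℝ (Fin d)), ‖y‖ ^ 2 = ∑ j, (y j) ^ 2 := by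
    intro y
    rw [EuclideanSpace.norm_eq, Real.sq_sqrt (by positivity)]
    simp [sq_abs]
  have key : ∀ ω, ‖x t ω - v ω‖ ^ 2 ≤
      (τmax : ℝ) * ∑ i ∈ Finset.range τmax, ‖x (t - i) ω - x (t - i - 1) ω‖ ^ 2 := by
    intro ω
    rw [hnorm]
    have hcomp : ∀ j, ((x t ω - v ω) j) ^ 2 ≤
        (τmax : ℝ) * ∑ i ∈ Finset.range τmax, (x (t - i) ω j - x (t - i - 1) ω j) ^ 2 := by
      intro j
      have htel : x t ω j - v ω j = ∑ i ∈ Finset.range (τ j),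
          (x (t - i) ω j - x (t - i - 1) ω j) := by
        rw [hview]
        have := Finset.sum_range_sub' (fun i => x (t - i) ω j) (τ j)
        simpa [Nat.sub_sub] using this.symm
      have habs : |x t ω j - v ω j| ≤ ∑ i ∈ Finset.range τmax,
          |x (t - i) ω j - x (t - i - 1) ω j| := by
        rw [htel]
        refine (Finset.abs_sum_le_sum_abs _ _).trans ?_
        exact Finset.sum_le_sum_of_subset_of_nonneg
          (Finset.range_subset_range.2 (hτ j)) (fun i _ _ => abs_nonneg _)
      have hsq : (x t ω j - v ω j) ^ 2 ≤ (∑ i ∈ Finset.range τmax,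
          |x (t - i) ω j - x (t - i - 1) ω j|) ^ 2 := by
        rw [← sq_abs]
        exact pow_le_pow_left₀ (abs_nonneg _) habs 2
      refine hsq.trans ?_
      have := sq_sum_le_card_mul_sum_sq
        (s := Finset.range τmax) (f := fun i => |x (t - i) ω j - x (t - i - 1) ω j|)
      simpa [sq_abs] using this
    calc ∑ j, ((x t ω - v ω) j) ^ 2
        ≤ ∑ j, (τmax : ℝ) * ∑ i ∈ Finset.range τmax,
            (x (t - i) ω j - x (t - i - 1) ω j) ^ 2 :=
          Finset.sum_le_sum fun j _ => hcomp j
      _ = (τmax : ℝ) * ∑ i ∈ Finset.range τmax, ∑ j,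
            (x (t - i) ω j - x (t - i - 1) ω j) ^ 2 := by
          rw [← Finset.mul_sum, Finset.sum_comm]
      _ = (τmax : ℝ) * ∑ i ∈ Finset.range τmax, ‖x (t - i) ω - x (t - i - 1) ω‖ ^ 2 := by
          congr 1
          refine Finset.sum_congr rfl fun i _ => ?_
          rw [hnorm]
          rfl
  -- integrability of each summand
  have hsucc : ∀ i ∈ Finset.range τmax, t - i - 1 + 1 = t - i := by
    intro i hi
    have := Finset.mem_range.1 hi
    omega
  have hint' : ∀ i ∈ Finset.range τmax,
      Integrable (fun ω => ‖x (t - i) ω - x (t - i - 1) ω‖ ^ 2) μ := by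
    intro i hi
    have := hint (t - i - 1)
    rwa [hsucc i hi] at this
  have hG : Integrable (fun ω => (τmax : ℝ) * ∑ i ∈ Finset.range τmax,
      ‖x (t - i) ω - x (t - i - 1) ω‖ ^ 2) μ :=
    (integrable_finset_sum _ hint').const_mul _
  have hmono : ∫ ω, ‖x t ω - v ω‖ ^ 2 ∂μ ≤
      ∫ ω, (τmax : ℝ) * ∑ i ∈ Finset.range τmax,
        ‖x (t - i) ω - x (t - i - 1) ω‖ ^ 2 ∂μ := by
    refine integral_mono_of_nonneg ?_ hG ?_
    · exact Filter.Eventually.of_forall fun ω => by positivity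
    · exact Filter.Eventually.of_forall key
  refine hmono.trans ?_
  rw [integral_const_mul, integral_finset_sum _ hint']
  have hsum : ∑ i ∈ Finset.range τmax, ∫ ω, ‖x (t - i) ω - x (t - i - 1) ω‖ ^ 2 ∂μ
      ≤ (τmax : ℝ) * (α ^ 2 * M ^ 2) := by
    calc ∑ i ∈ Finset.range τmax, ∫ ω, ‖x (t - i) ω - x (t - i - 1) ω‖ ^ 2 ∂μ
        ≤ ∑ _i ∈ Finset.range τmax, α ^ 2 * M ^ 2 := by
          refine Finset.sum_le_sum fun i hi => ?_
          have := hstep (t - i - 1)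
          rwa [hsucc i hi] at this
      _ = (τmax : ℝ) * (α ^ 2 * M ^ 2) := by rw [Finset.sum_const, Finset.card_range, nsmul_eq_mul]
  have h1 : (τmax : ℝ) * ((τmax : ℝ) * (α ^ 2 * M ^ 2)) ≤
      (d : ℝ) * (τmax : ℝ) ^ 2 * α ^ 2 * M ^ 2 := by
    have hd1 : (1 : ℝ) ≤ (d : ℝ) := by exact_mod_cast hd
    nlinarith [sq_nonneg ((τmax : ℝ) * α * M), (Nat.cast_nonneg τmax : (0:ℝ) ≤ τmax), sq_nonneg α, sq_nonneg M]
  refine le_trans ?_ h1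
  exact mul_le_mul_of_nonneg_left hsum (Nat.cast_nonneg _)
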